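/- Let 1 ≤ r ≤ n−1, let Q^r = [−1,1]^r ⊂ ℝ^r be the cube, let O^{n−r} = {y ∈ ℝ^{n−r} : |y₁| + ⋯ + |y_{n−r}| ≤ 1} be the cross-polytope, and let D ⊂ ℝⁿ = ℝ^r × ℝ^{n−r} be the convex hull of (Q^r × {0}) ∪ ({0} × O^{n−r}). Then vol_n(D) = 2ⁿ·r!/n!, vol_{n−1}(P_i(D)) = 2^{n−1}·(r−1)!/(n−1)! for every 1 ≤ i ≤ r, and vol_{n−r}(P_{[r]}(D)) = 2^{n−r}/(n−r)!; consequently (n/r)^r · binom(n,r)^{−1} · vol_{n−r}(P_{[r]}(D)) · vol_n(D)^{r−1} = ∏_{i=1}^{r} vol_{n−1}(P_i(D)), i.e., D attains equality in the projection inequality of Lemma 5.5. -/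

import Mathlib

open MeasureTheory

/-- Coordinate projection deleting the coordinate of index `i` (0-based). -/
noncomputable def delCoord {n : ℕ} (i : Fin n) (x : EuclideanSpace ℝ (Fin n)) :
    EuclideanSpace ℝ (Fin (n - 1)) :=
  WithLp.toLp 2 fun j => if (j : ℕ) < (i : ℕ) then x ⟨j, by have := j.2; omega⟩
    else x ⟨(j : ℕ) + 1, by have := j.2; omega⟩

/-- Coordinate projection deleting the first `r` coordinates. -/
noncomputable def delFirst {n : ℕ} (r : ℕ) (x : EuclideanSpace ℝ (Fin n)) :
    EuclideanSpace ℝ (Fin (n - r)) :=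
  WithLp.toLp 2 fun j => x ⟨(j : ℕ) + r, by have := j.2; omega⟩

/-- The cube `Q^r × {0} ⊂ ℝⁿ` (first `r` coordinates in `[−1,1]`, the rest zero). -/
def cubeSlice (n r : ℕ) : Set (EuclideanSpace ℝ (Fin n)) :=
  {x | (∀ i : Fin n, (i : ℕ) < r → |x i| ≤ 1) ∧ ∀ i : Fin n, r ≤ (i : ℕ) → x i = 0}

/-- The cross-polytope `{0} × O^{n−r} ⊂ ℝⁿ` (first `r` coordinates zero, the rest in
the `(n−r)`-dimensional octahedron). -/
def octSlice (n r : ℕ) : Set (EuclideanSpace ℝ (Fin n)) :=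
  {x | (∀ i : Fin n, (i : ℕ) < r → x i = 0) ∧
    ∑ i ∈ Finset.univ.filter (fun i : Fin n => r ≤ (i : ℕ)), |x i| ≤ 1}

/-! ### Auxiliary definitions and lemmas -/

/-- The ℓ¹-mass of the coordinates of index `≥ r`. -/
noncomputable def tS {n : ℕ} (r : ℕ) (x : Fin n → ℝ) : ℝ :=
  ∑ i ∈ Finset.univ.filter (fun i : Fin n => r ≤ (i : ℕ)), |x i|

/-- The scaled "cube ⊕ cross-polytope" body. -/
def Vset (n r : ℕ) (a : ℝ) : Set (Fin n → ℝ) :=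
  {x | tS r x ≤ a ∧ ∀ i : Fin n, (i : ℕ) < r → |x i| ≤ a - tS r x}

lemma tS_nonneg {n r : ℕ} (x : Fin n → ℝ) : 0 ≤ tS r x :=
  Finset.sum_nonneg fun _ _ => abs_nonneg _

lemma measurable_tS {n r : ℕ} : Measurable (tS r : (Fin n → ℝ) → ℝ) :=
  Finset.measurable_sum _ fun i _ => (measurable_pi_apply i).abs

lemma measurableSet_Vset (n r : ℕ) (a : ℝ) : MeasurableSet (Vset n r a) := by
  have h1 : MeasurableSet {x : Fin n → ℝ | tS r x ≤ a} :=
    measurableSet_le measurable_tS measurable_const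
  have h2 : ∀ i : Fin n, MeasurableSet {x : Fin n → ℝ | |x i| ≤ a - tS r x} := fun i =>
    measurableSet_le (measurable_pi_apply i).abs (measurable_const.sub measurable_tS)
  have : Vset n r a = {x | tS r x ≤ a} ∩ ⋂ i ∈ Finset.univ.filter (fun i : Fin n => (i:ℕ) < r),
      {x : Fin n → ℝ | |x i| ≤ a - tS r x} := by
    ext x
    simp only [Vset, Set.mem_setOf_eq, Set.mem_inter_iff, Set.mem_iInter, Finset.mem_filter,
      Finset.mem_univ, true_and]
  rw [this]
  exact h1.inter (MeasurableSet.biInter (Set.to_countable _) fun i _ => h2 i)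

lemma Vset_empty {n r : ℕ} {a : ℝ} (ha : a < 0) : Vset n r a = ∅ := by
  ext x
  simp only [Vset, Set.mem_setOf_eq, Set.mem_empty_iff_false, iff_false, not_and]
  intro h
  exact absurd h (not_le.2 (lt_of_lt_of_le ha (tS_nonneg x)))

lemma sum_shift {n r m : ℕ} (h : r + m = n) (f : Fin n → ℝ) :
    ∑ i ∈ Finset.univ.filter (fun i : Fin n => r ≤ (i : ℕ)), f i
      = ∑ j : Fin m, f ⟨(j : ℕ) + r, by omega⟩ := by
  refine Finset.sum_bij' (fun (i : Fin n) (hi : i ∈ Finset.univ.filter _) =>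
      (⟨(i : ℕ) - r, by
        simp only [Finset.mem_filter, Finset.mem_univ, true_and] at hi
        have := i.2; omega⟩ : Fin m))
    (fun (j : Fin m) _ => (⟨(j : ℕ) + r, by have := j.2; omega⟩ : Fin n)) ?_ ?_ ?_ ?_ ?_
  · intro a ha; exact Finset.mem_univ _
  · intro a ha
    simp only [Finset.mem_filter, Finset.mem_univ, true_and]
    omega
  · intro a ha
    simp only [Finset.mem_filter, Finset.mem_univ, true_and] at ha
    apply Fin.ext; simp; omega
  · intro a ha; apply Fin.ext; simp
  · intro a ha
    simp only [Finset.mem_filter, Finset.mem_univ, true_and] at ha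
    congr 1; apply Fin.ext; simp; omega

lemma tS_snoc {N r : ℕ} (hrN : r ≤ N) (y : Fin N → ℝ) (s : ℝ) :
    tS r (Fin.snoc y s : Fin (N+1) → ℝ) = tS r y + |s| := by
  unfold tS
  rw [Finset.sum_filter, Finset.sum_filter, Fin.sum_univ_castSucc]
  simp [hrN]

lemma snoc_mem_Vset {N r : ℕ} (hrN : r ≤ N) (a : ℝ) (y : Fin N → ℝ) (s : ℝ) :
    (Fin.snoc y s : Fin (N+1) → ℝ) ∈ Vset (N+1) r a ↔ y ∈ Vset N r (a - |s|) := by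
  simp only [Vset, Set.mem_setOf_eq, tS_snoc hrN]
  constructor
  · rintro ⟨h1, h2⟩
    refine ⟨by linarith, fun j hj => ?_⟩
    have := h2 (Fin.castSucc j) (by simpa using hj)
    rw [Fin.snoc_castSucc] at this
    linarith
  · rintro ⟨h1, h2⟩
    refine ⟨by linarith, fun i hi => ?_⟩
    have hiN : (i : ℕ) < N := lt_of_lt_of_le hi hrN
    have hx : (Fin.snoc y s : Fin (N+1) → ℝ) i = y ⟨(i : ℕ), hiN⟩ := by
      conv_lhs => rw [show i = Fin.castSucc ⟨(i : ℕ), hiN⟩ from Fin.ext rfl]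
      rw [Fin.snoc_castSucc]
    rw [hx]
    have := h2 ⟨(i : ℕ), hiN⟩ hi
    linarith

lemma lint_aux (m : ℕ) (a c : ℝ) (ha : 0 ≤ a) (hc : 0 ≤ c) :
    ∫⁻ s in Set.Icc (-a) a, ENNReal.ofReal ((a - |s|)^m * c)
      = ENNReal.ofReal ((2 * (a^(m+1) / (m+1))) * c) := by
  have hcont : Continuous fun s : ℝ => (a - |s|)^m * c := by continuity
  have hint : IntegrableOn (fun s : ℝ => (a - |s|)^m * c) (Set.Icc (-a) a) :=
    hcont.integrableOn_Icc
  have hnn : 0 ≤ᵐ[volume.restrict (Set.Icc (-a) a)] fun s : ℝ => (a - |s|)^m * c := by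
    refine (ae_restrict_iff' measurableSet_Icc).2 (ae_of_all _ fun s hs => ?_)
    have h1 : |s| ≤ a := abs_le.2 ⟨hs.1, hs.2⟩
    have : (0:ℝ) ≤ a - |s| := by linarith
    positivity
  rw [← ofReal_integral_eq_lintegral_ofReal hint hnn]
  congr 1
  rw [MeasureTheory.integral_Icc_eq_integral_Ioc,
    ← intervalIntegral.integral_of_le (by linarith : -a ≤ a)]
  have hi1 : IntervalIntegrable (fun s : ℝ => (a - |s|)^m * c) volume (-a) 0 :=
    hcont.intervalIntegrable _ _
  have hi2 : IntervalIntegrable (fun s : ℝ => (a - |s|)^m * c) volume 0 a :=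
    hcont.intervalIntegrable _ _
  rw [← intervalIntegral.integral_add_adjacent_intervals hi1 hi2]
  have h1 : ∫ s in (0:ℝ)..a, (a - |s|)^m * c = a^(m+1)/(m+1) * c := by
    have hco : ∀ s ∈ Set.uIcc (0:ℝ) a, (a - |s|)^m * c = (a - s)^m * c := fun s hs => by
      rw [Set.uIcc_of_le ha] at hs; rw [abs_of_nonneg hs.1]
    rw [intervalIntegral.integral_congr hco, intervalIntegral.integral_mul_const,
      intervalIntegral.integral_comp_sub_left (fun x : ℝ => x^m) a]
    simp [integral_pow]
  have h2 : ∫ s in (-a:ℝ)..0, (a - |s|)^m * c = a^(m+1)/(m+1) * c := by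
    have hco : ∀ s ∈ Set.uIcc (-a) (0:ℝ), (a - |s|)^m * c = (s + a)^m * c := fun s hs => by
      rw [Set.uIcc_of_le (by linarith : -a ≤ (0:ℝ))] at hs
      rw [abs_of_nonpos hs.2]; ring_nf
    rw [intervalIntegral.integral_congr hco, intervalIntegral.integral_mul_const,
      intervalIntegral.integral_comp_add_right (fun x : ℝ => x^m) a]
    simp [integral_pow]
  rw [h1, h2]; ring

lemma vol_Vset_aux (r : ℕ) : ∀ (m : ℕ) (a : ℝ), 0 ≤ a →
    Measure.pi (fun _ : Fin (r+m) => (volume : Measure ℝ)) (Vset (r+m) r a)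
      = ENNReal.ofReal (a^(r+m) * (2^(r+m) * r.factorial / (r+m).factorial)) := by
  intro m
  induction m with
  | zero =>
    intro a ha
    have hfe : Finset.univ.filter (fun i : Fin (r+0) => r ≤ (i : ℕ)) = ∅ :=
      Finset.filter_false_of_mem (fun i _ => by have := i.2; omega)
    have htS : ∀ x : Fin (r+0) → ℝ, tS r x = 0 := fun x => by
      rw [tS, hfe, Finset.sum_empty]
    have hset : Vset (r+0) r a = Set.pi Set.univ (fun _ : Fin (r+0) => Set.Icc (-a) a) := by
      ext x
      simp only [Vset, Set.mem_setOf_eq, htS, sub_zero, Set.mem_pi, Set.mem_univ, true_implies,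
        Set.mem_Icc, ← abs_le]
      exact ⟨fun h i => h.2 i (by have := i.2; omega), fun h => ⟨ha, fun i _ => h i⟩⟩
    rw [hset, Measure.pi_pi]
    simp only [Real.volume_Icc, sub_neg_eq_add]
    rw [Finset.prod_const, Finset.card_univ, Fintype.card_fin,
      ← ENNReal.ofReal_pow (by linarith : (0:ℝ) ≤ a + a)]
    congr 1
    have : ((r+0).factorial : ℝ) ≠ 0 := by positivity
    field_simp
    ring
  | succ m ih =>
    intro a ha
    set N := r + m with hN
    have hrN : r ≤ N := by omega
    rw [show r + (m+1) = N + 1 from rfl]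
    set C : ℝ := 2^N * r.factorial / N.factorial with hC
    have hCnn : 0 ≤ C := by positivity
    set e := MeasurableEquiv.piFinSuccAbove (fun _ : Fin (N+1) => ℝ) (Fin.last N) with he
    have hmp : MeasurePreserving e.symm
        ((volume : Measure ℝ).prod (Measure.pi fun _ : Fin N => (volume : Measure ℝ)))
        (Measure.pi fun _ : Fin (N+1) => (volume : Measure ℝ)) :=
      (measurePreserving_piFinSuccAbove (fun _ : Fin (N+1) => (volume : Measure ℝ))
        (Fin.last N)).symm e
    have hpre := hmp.measure_preimage (measurableSet_Vset (N+1) r a).nullMeasurableSet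
    have hsymm : ∀ p : ℝ × (Fin N → ℝ), e.symm p = (Fin.snoc p.2 p.1 : Fin (N+1) → ℝ) := by
      rintro ⟨s, y⟩
      simp [he, MeasurableEquiv.piFinSuccAbove, Fin.snocEquiv]
    have hset : e.symm ⁻¹' (Vset (N+1) r a)
        = {p : ℝ × (Fin N → ℝ) | p.2 ∈ Vset N r (a - |p.1|)} := by
      ext ⟨s, y⟩
      simp only [Set.mem_preimage, hsymm, Set.mem_setOf_eq]
      exact snoc_mem_Vset hrN a y s
    rw [← hpre, hset]
    have hms : MeasurableSet {p : ℝ × (Fin N → ℝ) | p.2 ∈ Vset N r (a - |p.1|)} :=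
      hset ▸ (e.symm.measurable (measurableSet_Vset _ _ _))
    rw [Measure.prod_apply hms]
    have hsec : ∀ s : ℝ, (Prod.mk s ⁻¹' {p : ℝ × (Fin N → ℝ) | p.2 ∈ Vset N r (a - |p.1|)})
        = Vset N r (a - |s|) := fun s => rfl
    simp only [hsec]
    have hind : ∀ s : ℝ, Measure.pi (fun _ : Fin N => (volume : Measure ℝ)) (Vset N r (a - |s|))
        = Set.indicator (Set.Icc (-a) a)
            (fun s => ENNReal.ofReal ((a - |s|)^N * C)) s := by
      intro s
      by_cases hs : s ∈ Set.Icc (-a) a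
      · rw [Set.indicator_of_mem hs]
        have habs : |s| ≤ a := abs_le.2 ⟨hs.1, hs.2⟩
        exact ih (a - |s|) (by linarith)
      · rw [Set.indicator_of_notMem hs]
        have habs : a < |s| := by
          rw [Set.mem_Icc, not_and_or, not_le, not_le] at hs
          rcases hs with h | h
          · have h2 : a < -s := by linarith
            exact lt_of_lt_of_le h2 (neg_le_abs s)
          · exact lt_of_lt_of_le h (le_abs_self s)
        rw [Vset_empty (by linarith), measure_empty]
    simp only [hind]
    rw [lintegral_indicator measurableSet_Icc _, lint_aux N a C ha hCnn]
    congr 1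
    rw [hC]
    have h1 : ((N+1).factorial : ℝ) = (N+1) * N.factorial := by
      rw [Nat.factorial_succ]; push_cast; ring
    have h2 : (N.factorial : ℝ) ≠ 0 := by positivity
    have h3 : ((N:ℝ)+1) ≠ 0 := by positivity
    rw [h1]
    field_simp
    ring

lemma vol_Vset_euclid (n r : ℕ) (hrn : r ≤ n) :
    (volume (WithLp.ofLp ⁻¹' Vset n r 1 : Set (EuclideanSpace ℝ (Fin n)))).toReal
      = 2^n * (r.factorial : ℝ) / (n.factorial : ℝ) := by
  have h := (EuclideanSpace.volume_preserving_symm_measurableEquiv_toLp (Fin n)).measure_preimage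
    (measurableSet_Vset n r 1).nullMeasurableSet
  have hpre : (MeasurableEquiv.toLp 2 (Fin n → ℝ)).symm ⁻¹' (Vset n r 1)
      = (WithLp.ofLp ⁻¹' Vset n r 1 : Set (EuclideanSpace ℝ (Fin n))) := rfl
  rw [hpre] at h
  rw [h, volume_pi]
  obtain ⟨m, rfl⟩ : ∃ m, n = r + m := ⟨n - r, by omega⟩
  rw [vol_Vset_aux r m 1 zero_le_one, one_pow, one_mul, ENNReal.toReal_ofReal (by positivity)]

lemma hull_eq (n r : ℕ) :
    convexHull ℝ (cubeSlice n r ∪ octSlice n r)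
      = (WithLp.ofLp ⁻¹' Vset n r 1 : Set (EuclideanSpace ℝ (Fin n))) := by
  apply Set.Subset.antisymm
  · apply convexHull_min
    · rintro x (⟨h1, h2⟩ | ⟨h1, h2⟩)
      · have ht : tS r x = 0 := Finset.sum_eq_zero fun i hi => by
          rw [Finset.mem_filter] at hi; rw [h2 i hi.2, abs_zero]
        exact ⟨by rw [ht]; norm_num, fun i hi => by rw [ht]; simpa using h1 i hi⟩
      · have h2' : tS r x ≤ 1 := h2
        exact ⟨h2', fun i hi => by rw [h1 i hi, abs_zero]; linarith⟩
    · rintro x hx y hy a b ha hb hab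
      have happ : ∀ i : Fin n, (a • x + b • y) i = a * x i + b * y i := fun i => by
        simp [PiLp.add_apply, PiLp.smul_apply, smul_eq_mul]
      have hptwise : ∀ i : Fin n, |(a • x + b • y) i| ≤ a * |x i| + b * |y i| := fun i => by
        rw [happ i]
        calc |a * x i + b * y i| ≤ |a * x i| + |b * y i| := abs_add_le _ _
          _ = a * |x i| + b * |y i| := by
            rw [abs_mul, abs_mul, abs_of_nonneg ha, abs_of_nonneg hb]
      have key : tS r (a • x + b • y) ≤ a * tS r x + b * tS r y := by
        unfold tS
        rw [Finset.mul_sum, Finset.mul_sum, ← Finset.sum_add_distrib]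
        exact Finset.sum_le_sum fun i _ => hptwise i
      have hx2 := hx.2
      have hy2 := hy.2
      refine ⟨by nlinarith [hx.1, hy.1], fun i hi => ?_⟩
      have h1 : a * |x i| ≤ a * (1 - tS r x) := mul_le_mul_of_nonneg_left (hx2 i hi) ha
      have h2 : b * |y i| ≤ b * (1 - tS r y) := mul_le_mul_of_nonneg_left (hy2 i hi) hb
      have := hptwise i
      nlinarith
  · intro x hx
    obtain ⟨hx1, hx2⟩ := hx
    set t := tS r x with htdef
    have htnn : 0 ≤ t := tS_nonneg x
    rcases eq_or_lt_of_le htnn with hzero | htpos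
    · apply subset_convexHull ℝ _
      left
      have hall : ∀ i ∈ Finset.univ.filter (fun i : Fin n => r ≤ (i : ℕ)), |x i| = 0 := by
        intro i hi
        exact (Finset.sum_eq_zero_iff_of_nonneg (fun i _ => abs_nonneg (x i))).1 hzero.symm i hi
      refine ⟨fun i hi => by have := hx2 i hi; linarith, fun i hi => ?_⟩
      have := hall i (by simp [hi])
      exact abs_eq_zero.1 this
    rcases le_or_gt 1 t with hone | htlt
    · apply subset_convexHull ℝ _
      right
      refine ⟨fun i hi => ?_, hx1⟩
      have := hx2 i hi
      have habs : |x i| ≤ 0 := by linarith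
      exact abs_eq_zero.1 (le_antisymm habs (abs_nonneg _))
    · set u : EuclideanSpace ℝ (Fin n) := WithLp.toLp 2 fun i => if (i : ℕ) < r then x i / (1 - t) else 0
        with hu
      set v : EuclideanSpace ℝ (Fin n) := WithLp.toLp 2 fun i => if (i : ℕ) < r then 0 else x i / t with hv
      have ht1 : (0:ℝ) < 1 - t := by linarith
      have hxuv : x = (1 - t) • u + t • v := by
        ext i
        have : ((1 - t) • u + t • v) i = (1 - t) * u i + t * v i := by
          simp [PiLp.add_apply, PiLp.smul_apply, smul_eq_mul]
        rw [this, hu, hv]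
        by_cases hi : (i : ℕ) < r <;> simp [hi] <;> field_simp
      have humem : u ∈ cubeSlice n r := by
        constructor
        · intro i hi
          simp only [hu, hi, if_pos]
          rw [abs_div, abs_of_pos ht1, div_le_one ht1]
          exact hx2 i hi
        · intro i hi
          simp only [hu]
          rw [if_neg (by omega)]
      have hvmem : v ∈ octSlice n r := by
        constructor
        · intro i hi
          simp only [hv, hi, if_pos]
        · have hs : ∑ i ∈ Finset.univ.filter (fun i : Fin n => r ≤ (i : ℕ)), |v i|
              = (∑ i ∈ Finset.univ.filter (fun i : Fin n => r ≤ (i : ℕ)), |x i|) / t := by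
            rw [Finset.sum_div]
            refine Finset.sum_congr rfl fun i hi => ?_
            rw [Finset.mem_filter] at hi
            simp only [hv]
            rw [if_neg (by omega), abs_div, abs_of_pos htpos]
          have hxt : (∑ i ∈ Finset.univ.filter (fun i : Fin n => r ≤ (i : ℕ)), |x i|) = t := rfl
          rw [hs, hxt, div_self (ne_of_gt htpos)]
      have humem' : u ∈ convexHull ℝ (cubeSlice n r ∪ octSlice n r) :=
        subset_convexHull ℝ _ (Set.mem_union_left _ humem)
      have hvmem' : v ∈ convexHull ℝ (cubeSlice n r ∪ octSlice n r) :=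
        subset_convexHull ℝ _ (Set.mem_union_right _ hvmem)
      rw [hxuv]
      exact (convex_convexHull ℝ _) humem' hvmem' (a := 1 - t) (b := t)
        (by linarith) (le_of_lt htpos) (by ring)

lemma delFirst_image (n r : ℕ) (hrn : r ≤ n) :
    delFirst r '' (WithLp.ofLp ⁻¹' Vset n r 1 : Set (EuclideanSpace ℝ (Fin n)))
      = (WithLp.ofLp ⁻¹' Vset (n-r) 0 1 : Set (EuclideanSpace ℝ (Fin (n-r)))) := by
  have hshift : ∀ x : EuclideanSpace ℝ (Fin n),
      tS 0 (delFirst r x : Fin (n-r) → ℝ) = tS r x := by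
    intro x
    unfold tS
    rw [sum_shift (show 0 + (n-r) = n-r by omega) (fun j => |(delFirst r x : Fin (n-r) → ℝ) j|),
      sum_shift (show r + (n-r) = n by omega) (fun i => |x i|)]
    refine Finset.sum_congr rfl fun j _ => ?_
    simp only [delFirst]
    congr 1
  ext y
  constructor
  · rintro ⟨x, hx, rfl⟩
    refine ⟨by rw [hshift]; exact hx.1, fun j hj => by omega⟩
  · intro hy
    classical
    refine ⟨(WithLp.toLp 2 fun k => if h : r ≤ (k : ℕ) then y ⟨(k : ℕ) - r, by have := k.2; omega⟩ else 0 :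
      EuclideanSpace ℝ (Fin n)), ?_, ?_⟩
    · have key : tS r (fun k : Fin n => if h : r ≤ (k : ℕ) then
          y ⟨(k : ℕ) - r, by have := k.2; omega⟩ else 0) = tS 0 (y : Fin (n-r) → ℝ) := by
        unfold tS
        rw [sum_shift (show r + (n-r) = n by omega), sum_shift (show 0 + (n-r) = n-r by omega)
          (fun j => |(y : Fin (n-r) → ℝ) j|)]
        refine Finset.sum_congr rfl fun j _ => ?_
        beta_reduce
        rw [dif_pos (show r ≤ ((⟨(j:ℕ) + r, by omega⟩ : Fin n) : ℕ) by simp)]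
        congr 1
        exact congrArg y (Fin.ext (by simp only [Fin.val_mk]; omega))
      refine ⟨by rw [key]; exact hy.1, fun k hk => ?_⟩
      rw [key]
      beta_reduce
      rw [WithLp.ofLp_toLp]
      rw [dif_neg (show ¬ r ≤ (k : ℕ) by omega)]
      simp only [abs_zero]
      have := hy.1
      linarith
    · ext j
      simp only [delFirst]
      rw [dif_pos (by omega : r ≤ (j : ℕ) + r)]
      exact congrArg y (Fin.ext (by simp only [Fin.val_mk]; omega))

lemma delCoord_image (n r : ℕ) (i : Fin n) (hi : (i : ℕ) < r) (hr : 1 ≤ r) (hrn : r ≤ n) :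
    delCoord i '' (WithLp.ofLp ⁻¹' Vset n r 1 : Set (EuclideanSpace ℝ (Fin n)))
      = (WithLp.ofLp ⁻¹' Vset (n-1) (r-1) 1 : Set (EuclideanSpace ℝ (Fin (n-1)))) := by
  have hin : (i : ℕ) < n := i.2
  ext y
  constructor
  · rintro ⟨x, hx, rfl⟩
    have key : tS (r-1) (delCoord i x : Fin (n-1) → ℝ) = tS r x := by
      unfold tS
      rw [sum_shift (show (r-1) + (n-r) = n-1 by omega)
          (fun j => |(delCoord i x : Fin (n-1) → ℝ) j|),
        sum_shift (show r + (n-r) = n by omega) (fun k => |x k|)]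
      refine Finset.sum_congr rfl fun j _ => ?_
      simp only [delCoord]
      rw [if_neg (show ¬ ((⟨(j:ℕ) + (r-1), by omega⟩ : Fin (n-1)) : ℕ) < (i:ℕ) by
        simp only [Fin.val_mk]; omega)]
      congr 1
      exact congrArg x (Fin.ext (by simp only [Fin.val_mk]; omega))
    refine ⟨by rw [key]; exact hx.1, fun j hj => ?_⟩
    rw [key]
    simp only [delCoord]
    by_cases hji : (j : ℕ) < (i : ℕ)
    · rw [if_pos hji]
      exact hx.2 _ (by simp only [Fin.val_mk]; omega)
    · rw [if_neg hji]
      exact hx.2 _ (by simp only [Fin.val_mk]; omega)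
  · intro hy
    classical
    set x : EuclideanSpace ℝ (Fin n) := WithLp.toLp 2 fun k =>
      if h1 : (k : ℕ) < (i : ℕ) then y ⟨(k : ℕ), by omega⟩
      else if h2 : (k : ℕ) = (i : ℕ) then 0
      else y ⟨(k : ℕ) - 1, by have := k.2; omega⟩ with hxdef
    have hv1 : ∀ k : Fin n, (h : (k : ℕ) < (i : ℕ)) → x k = y ⟨(k : ℕ), by omega⟩ := by
      intro k h
      simp only [hxdef]
      rw [dif_pos h]
    have hv2 : ∀ k : Fin n, (k : ℕ) = (i : ℕ) → x k = 0 := by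
      intro k h
      simp only [hxdef]
      rw [dif_neg (by omega), dif_pos h]
    have hv3 : ∀ k : Fin n, (h : (i : ℕ) < (k : ℕ)) → x k = y ⟨(k : ℕ) - 1,
        by have := k.2; omega⟩ := by
      intro k h
      simp only [hxdef]
      rw [dif_neg (by omega), dif_neg (by omega)]
    have key : tS r (x : Fin n → ℝ) = tS (r-1) (y : Fin (n-1) → ℝ) := by
      unfold tS
      rw [sum_shift (show r + (n-r) = n by omega) (fun k => |(x : Fin n → ℝ) k|),
        sum_shift (show (r-1) + (n-r) = n-1 by omega) (fun j => |(y : Fin (n-1) → ℝ) j|)]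
      refine Finset.sum_congr rfl fun j _ => ?_
      beta_reduce
      rw [hv3 ⟨(j:ℕ) + r, by omega⟩ (by simp only [Fin.val_mk]; omega)]
      congr 1
      exact congrArg y (Fin.ext (by simp only [Fin.val_mk]; omega))
    refine ⟨x, ⟨by rw [key]; exact hy.1, fun k hk => ?_⟩, ?_⟩
    · rw [key]
      by_cases h1 : (k : ℕ) < (i : ℕ)
      · rw [hv1 k h1]
        exact hy.2 _ (by simp only [Fin.val_mk]; omega)
      · by_cases h2 : (k : ℕ) = (i : ℕ)
        · rw [hv2 k h2]
          simp only [abs_zero]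
          have := hy.1
          linarith
        · rw [hv3 k (by omega)]
          exact hy.2 _ (by simp only [Fin.val_mk]; omega)
    · ext j
      simp only [delCoord]
      by_cases hji : (j : ℕ) < (i : ℕ)
      · rw [if_pos hji, hv1 ⟨(j:ℕ), by omega⟩ (by simp only [Fin.val_mk]; omega)]
      · rw [if_neg hji, hv3 ⟨(j:ℕ) + 1, by omega⟩ (by simp only [Fin.val_mk]; omega)]
        exact congrArg y (Fin.ext (by simp only [Fin.val_mk]; omega))

lemma natkey (n r : ℕ) (hr : 1 ≤ r) (hrn : r + 1 ≤ n) :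
    n - r + n * (r - 1) = (n - 1) * r := by
  obtain ⟨r', rfl⟩ : ∃ r', r = r' + 1 := ⟨r - 1, by omega⟩
  obtain ⟨d, rfl⟩ : ∃ d, n = r' + 1 + d := ⟨n - (r' + 1), by omega⟩
  have e1 : r' + 1 + d - (r' + 1) = d := by omega
  have e2 : r' + 1 + d - 1 = r' + d := by omega
  have e3 : r' + 1 - 1 = r' := by omega
  rw [e1, e2, e3]
  ring

lemma arith (n r : ℕ) (hr : 1 ≤ r) (hrn : r + 1 ≤ n) :
    ((n : ℝ) / (r : ℝ)) ^ r * ((n.choose r : ℝ))⁻¹ *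
        (2 ^ (n - r) / ((n - r).factorial : ℝ)) *
        (2 ^ n * (r.factorial : ℝ) / (n.factorial : ℝ)) ^ (r - 1)
      = (2 ^ (n - 1) * ((r - 1).factorial : ℝ) / ((n - 1).factorial : ℝ)) ^ r := by
  have h2pow : (2:ℝ) ^ (n - r) * ((2:ℝ) ^ n) ^ (r - 1) = ((2:ℝ) ^ (n - 1)) ^ r := by
    rw [← pow_mul, ← pow_mul, ← pow_add]
    congr 1
    exact natkey n r hr hrn
  have hfr : (r.factorial : ℝ) = r * (r - 1).factorial := by
    rw [← Nat.mul_factorial_pred (by omega : r ≠ 0)]; push_cast; ring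
  have hfn : (n.factorial : ℝ) = n * (n - 1).factorial := by
    rw [← Nat.mul_factorial_pred (by omega : n ≠ 0)]; push_cast; ring
  have hr0 : (r : ℝ) ≠ 0 := by
    simpa using (by omega : r ≠ 0)
  have hn0 : (n : ℝ) ≠ 0 := by
    simpa using (by omega : n ≠ 0)
  have hfr0 : (r.factorial : ℝ) ≠ 0 := by positivity
  have hfn0 : (n.factorial : ℝ) ≠ 0 := by positivity
  have hfnr0 : ((n - r).factorial : ℝ) ≠ 0 := by positivity
  have hfr10 : ((r - 1).factorial : ℝ) ≠ 0 := by positivity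
  have hfn10 : ((n - 1).factorial : ℝ) ≠ 0 := by positivity
  have hb : ((n : ℝ) / r) * ((r.factorial : ℝ) / (n.factorial : ℝ)) * 2 ^ (n - 1)
      = 2 ^ (n - 1) * ((r - 1).factorial : ℝ) / ((n - 1).factorial : ℝ) := by
    rw [hfr, hfn]
    field_simp
  rw [← hb, Nat.cast_choose ℝ (show r ≤ n by omega)]
  have hxp : ∀ x : ℝ, x ^ r = x ^ (r - 1) * x := fun x => by
    rw [← pow_succ]
    congr 1
    omega
  rw [mul_pow, mul_pow, ← h2pow, div_pow, div_pow, div_pow, mul_pow,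
    hxp ((r.factorial : ℝ)), hxp ((n.factorial : ℝ)), hxp ((n : ℝ)), hxp ((r : ℝ))]
  field_simp

/-- Remark 5.6: `D = conv((Q^r × {0}) ∪ ({0} × O^{n−r}))` has
`vol_n(D) = 2ⁿ·r!/n!`, `vol_{n−1}(P_i(D)) = 2^{n−1}·(r−1)!/(n−1)!` for `1 ≤ i ≤ r`,
`vol_{n−r}(P_{[r]}(D)) = 2^{n−r}/(n−r)!`, and `D` attains equality in the projection
inequality of Lemma 5.5. -/
theorem cube_cross_polytope_equality (n r : ℕ) (hr : 1 ≤ r) (hrn : r + 1 ≤ n) :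
    (volume (convexHull ℝ (cubeSlice n r ∪ octSlice n r))).toReal =
        2 ^ n * (Nat.factorial r : ℝ) / (Nat.factorial n : ℝ) ∧
    (∀ i : Fin n, (i : ℕ) < r →
      (volume (delCoord i '' convexHull ℝ (cubeSlice n r ∪ octSlice n r))).toReal =
        2 ^ (n - 1) * (Nat.factorial (r - 1) : ℝ) / (Nat.factorial (n - 1) : ℝ)) ∧
    (volume (delFirst r '' convexHull ℝ (cubeSlice n r ∪ octSlice n r))).toReal =
        2 ^ (n - r) / (Nat.factorial (n - r) : ℝ) ∧
    ((n : ℝ) / (r : ℝ)) ^ r * ((n.choose r : ℝ))⁻¹ *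
        (volume (delFirst r '' convexHull ℝ (cubeSlice n r ∪ octSlice n r))).toReal *
        (volume (convexHull ℝ (cubeSlice n r ∪ octSlice n r))).toReal ^ (r - 1) =
      ∏ i : Fin r,
        (volume (delCoord (⟨(i : ℕ), by have := i.2; omega⟩ : Fin n) ''
          convexHull ℝ (cubeSlice n r ∪ octSlice n r))).toReal := by
  have hrn' : r ≤ n := by omega
  rw [hull_eq n r]
  have hvol : (volume (WithLp.ofLp ⁻¹' Vset n r 1 : Set (EuclideanSpace ℝ (Fin n)))).toReal
      = 2 ^ n * (Nat.factorial r : ℝ) / (Nat.factorial n : ℝ) := vol_Vset_euclid n r hrn'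
  have hdelC : ∀ i : Fin n, (i : ℕ) < r →
      (volume (delCoord i '' (WithLp.ofLp ⁻¹' Vset n r 1 : Set (EuclideanSpace ℝ (Fin n))))).toReal
        = 2 ^ (n - 1) * (Nat.factorial (r - 1) : ℝ) / (Nat.factorial (n - 1) : ℝ) := by
    intro i hi
    rw [delCoord_image n r i hi hr hrn']
    exact vol_Vset_euclid (n-1) (r-1) (by omega)
  have hdelF : (volume (delFirst r ''
      (WithLp.ofLp ⁻¹' Vset n r 1 : Set (EuclideanSpace ℝ (Fin n))))).toReal
        = 2 ^ (n - r) / (Nat.factorial (n - r) : ℝ) := by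
    rw [delFirst_image n r hrn']
    rw [vol_Vset_euclid (n-r) 0 (by omega)]
    norm_num
  refine ⟨hvol, hdelC, hdelF, ?_⟩
  rw [hvol, hdelF]
  have hprod : ∏ i : Fin r,
      (volume (delCoord (⟨(i : ℕ), by have := i.2; omega⟩ : Fin n) ''
        (WithLp.ofLp ⁻¹' Vset n r 1 : Set (EuclideanSpace ℝ (Fin n))))).toReal
      = ∏ _i : Fin r,
          (2 ^ (n - 1) * (Nat.factorial (r - 1) : ℝ) / (Nat.factorial (n - 1) : ℝ)) :=
    Finset.prod_congr rfl fun i _ => hdelC _ (by simpa using i.2)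
  rw [hprod, Finset.prod_const, Finset.card_univ, Fintype.card_fin]
  exact arith n r hr hrn
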